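/- The kernel of the map φ_1: End(V) → ℝ given by the trace equals sl(V), and for A, B ∈ End(V) with tr(A) = tr(B) = 0, the commutator [A,B] also has trace zero; more generally, for the partial trace maps φ_k, the Nijenhuis–Richardson bracket of elements of ker(φ_{k₁}) and ker(φ_{k₂}) lies in ker(φ_{k₁+k₂−1}). -/

import Mathlib

set_option maxHeartbeats 1000000


open Finset Equiv Equiv.Perm

variable {V : Type*} [AddCommGroup V] [Module ℝ V]

/-- The insertion operator `i_P Q` of the Nijenhuis–Richardson bracket, as a function:
the (normalized) alternatization of `(v₁,…) ↦ Q(P(v₁,…,v_{k+1}), v_{k+2},…)`. -/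
noncomputable def nrHook {k l : ℕ} (P : V [⋀^Fin (k + 1)]→ₗ[ℝ] V)
    (Q : V [⋀^Fin (l + 1)]→ₗ[ℝ] V) : (Fin (k + 1 + l) → V) → V :=
  fun v => (((Nat.factorial (k + 1)) * Nat.factorial l : ℝ))⁻¹ •
    ∑ σ : Equiv.Perm (Fin (k + 1 + l)),
      (Equiv.Perm.sign σ : ℤ) •
        Q (Fin.cons (P fun i : Fin (k + 1) => v (σ (Fin.castAdd l i)))
            fun j : Fin l => v (σ (Fin.natAdd (k + 1) j)))

/-- The Nijenhuis–Richardson bracket of `P ∈ Hom(Λ^{k+1}V, V)`, `Q ∈ Hom(Λ^{l+1}V, V)`. -/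
noncomputable def nrBracket {k l : ℕ} (P : V [⋀^Fin (k + 1)]→ₗ[ℝ] V)
    (Q : V [⋀^Fin (l + 1)]→ₗ[ℝ] V) : (Fin (k + 1 + l) → V) → V :=
  fun v => nrHook P Q v -
    ((-1 : ℤ) ^ (k * l)) • nrHook Q P (fun i : Fin (l + 1 + k) => v (Fin.cast (by omega) i))

section aux
variable [FiniteDimensional ℝ V] {n : ℕ} (b : Module.Basis (Fin n) ℝ V)

lemma trace_eq_sum_coord (f : V →ₗ[ℝ] V) :
    LinearMap.trace ℝ V f = ∑ i, b.coord i (f (b i)) := by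
  rw [LinearMap.trace_eq_matrix_trace ℝ b]
  simp [Matrix.trace, Matrix.diag, LinearMap.toMatrix_apply, Module.Basis.coord_apply]

lemma coord_comm (f g : V →ₗ[ℝ] V) :
    ∑ i, b.coord i (g (f (b i))) = ∑ i, b.coord i (f (g (b i))) := by
  have h1 := trace_eq_sum_coord b (g ∘ₗ f)
  have h2 := trace_eq_sum_coord b (f ∘ₗ g)
  have h3 : LinearMap.trace ℝ V (g ∘ₗ f) = LinearMap.trace ℝ V (f ∘ₗ g) :=
    LinearMap.trace_mul_comm ℝ g f
  simp only [LinearMap.comp_apply] at h1 h2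
  rw [← h1, ← h2, h3]

end aux

/-- `v ↦ P (Fin.cons v x)` as a linear map. -/
noncomputable def consMap {k : ℕ} (P : V [⋀^Fin (k + 1)]→ₗ[ℝ] V) (x : Fin k → V) :
    V →ₗ[ℝ] V :=
  P.toMultilinearMap.toLinearMap (Fin.cons 0 x) 0

@[simp] lemma consMap_apply {k : ℕ} (P : V [⋀^Fin (k + 1)]→ₗ[ℝ] V) (x : Fin k → V) (v : V) :
    consMap P x v = P (Fin.cons v x) := by
  simp [consMap, MultilinearMap.toLinearMap, Fin.update_cons_zero]

section perm

/-- Decomposition `ρ = ext(θ) * cycleRange p` of a permutation of `Fin (N+1)`,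
where `p = ρ⁻¹ 0`. -/
def permSplit (N : ℕ) : Fin (N + 1) × Perm (Fin N) ≃ Perm (Fin (N + 1)) where
  toFun x := decomposeFin.symm (0, x.2) * Fin.cycleRange x.1
  invFun ρ := (ρ⁻¹ 0, (decomposeFin (ρ * (Fin.cycleRange (ρ⁻¹ 0))⁻¹)).2)
  left_inv := by
    rintro ⟨p, θ⟩
    have hd0 : decomposeFin.symm (0, θ) 0 = (0 : Fin (N+1)) := by simp
    have hinv : (decomposeFin.symm (0, θ) * Fin.cycleRange p)⁻¹ 0 = p := by
      rw [mul_inv_rev]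
      have : (decomposeFin.symm (0, θ))⁻¹ (0 : Fin (N+1)) = 0 := by
        conv_lhs => rw [← hd0]
        exact Equiv.symm_apply_apply _ _
      simp only [Perm.mul_apply, this]
      have : Fin.cycleRange p p = 0 := Fin.cycleRange_self p
      conv_lhs => rw [← this]
      exact Equiv.symm_apply_apply _ _
    simp only [hinv, mul_inv_cancel_right, Equiv.apply_symm_apply]
  right_inv := by
    intro ρ
    simp only
    set p := ρ⁻¹ 0 with hp
    have h0 : (ρ * (Fin.cycleRange p)⁻¹) 0 = 0 := by
      have : (Fin.cycleRange p)⁻¹ 0 = p := by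
        conv_lhs => rw [← Fin.cycleRange_self p]
        exact Equiv.symm_apply_apply _ _
      simp [Perm.mul_apply, this, hp]
    have h1 : decomposeFin (ρ * (Fin.cycleRange p)⁻¹) =
        (0, (decomposeFin (ρ * (Fin.cycleRange p)⁻¹)).2) := by
      have := decomposeFin_symm_apply_zero
        (decomposeFin (ρ * (Fin.cycleRange p)⁻¹)).1 (decomposeFin (ρ * (Fin.cycleRange p)⁻¹)).2
      rw [Prod.mk.eta, Equiv.symm_apply_apply] at this
      rw [h0] at this
      exact Prod.ext this.symm rfl
    calc decomposeFin.symm (0, (decomposeFin (ρ * (Fin.cycleRange p)⁻¹)).2) * Fin.cycleRange p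
        = decomposeFin.symm (decomposeFin (ρ * (Fin.cycleRange p)⁻¹)) * Fin.cycleRange p := by
          rw [← h1]
      _ = ρ := by rw [Equiv.symm_apply_apply, inv_mul_cancel_right]

@[simp] lemma permSplit_apply {N : ℕ} (p : Fin (N + 1)) (θ : Perm (Fin N)) :
    permSplit N (p, θ) = decomposeFin.symm (0, θ) * Fin.cycleRange p := rfl

lemma sign_permSplit {N : ℕ} (p : Fin (N + 1)) (θ : Perm (Fin N)) :
    Perm.sign (permSplit N (p, θ)) = (-1) ^ (p : ℕ) * Perm.sign θ := by
  simp [Fin.sign_cycleRange, mul_comm]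

lemma cons_comp_ext {N : ℕ} {α : Type*} (c : α) (w : Fin N → α) (θ : Perm (Fin N))
    (t : Fin (N + 1)) :
    (Fin.cons c w : Fin (N + 1) → α) (decomposeFin.symm (0, θ) t) =
      (Fin.cons c (w ∘ θ) : Fin (N + 1) → α) t := by
  refine Fin.cases ?_ (fun x => ?_) t
  · simp
  · simp

end perm

section caseB
variable [FiniteDimensional ℝ V] {n : ℕ} (b : Module.Basis (Fin n) ℝ V)

lemma sum_coord_update_eq_zero {l : ℕ} (Q : V [⋀^Fin (l + 1)]→ₗ[ℝ] V)
    (hQ : ∀ u : Fin l → V, ∑ i, b.coord i (Q (Fin.cons (b i) u)) = 0)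
    (y : Fin (l + 1) → V) (s : Fin (l + 1)) (hs : s ≠ 0) :
    ∑ i, b.coord i (Q (Function.update y s (b i))) = 0 := by
  have key : ∀ v : V, Q (Function.update y s v) =
      - Q (Fin.cons v (Fin.tail (y ∘ Equiv.swap 0 s))) := by
    intro v
    have h := Q.map_swap (v := Function.update y s v) (Ne.symm hs)
    have he : Function.update y s v ∘ Equiv.swap 0 s =
        Fin.cons v (Fin.tail (y ∘ Equiv.swap 0 s)) := by
      funext t
      refine Fin.cases ?_ (fun r => ?_) t
      · show Function.update y s v (Equiv.swap 0 s 0) = v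
        rw [Equiv.swap_apply_left]
        exact Function.update_self s v y
      · have h1 : Equiv.swap (0 : Fin (l+1)) s r.succ ≠ s := by
          intro hc
          have := (Equiv.swap 0 s).injective (hc.trans (Equiv.swap_apply_left 0 s).symm)
          exact (Fin.succ_ne_zero r) this
        simp only [Function.comp_apply, Fin.cons_succ, Fin.tail]
        rw [Function.update_of_ne h1]
    rw [he] at h
    rw [h, neg_neg]
  calc ∑ i, b.coord i (Q (Function.update y s (b i)))
      = - ∑ i, b.coord i (Q (Fin.cons (b i) (Fin.tail (y ∘ Equiv.swap 0 s)))) := by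
        rw [← Finset.sum_neg_distrib]
        refine Finset.sum_congr rfl fun i _ => ?_
        rw [key (b i), map_neg]
    _ = 0 := by rw [hQ, neg_zero]

end caseB

section flip

open Fin.NatCast in
lemma finRotate_pow_apply (m j : ℕ) : ∀ x : Fin (m + 1),
    ((finRotate (m + 1)) ^ j) x = x + (j : Fin (m + 1)) := by
  induction j with
  | zero => intro x; simp
  | succ j ih =>
    intro x
    rw [pow_succ, Equiv.Perm.mul_apply, finRotate_succ_apply, ih]
    push_cast
    abel

/-- The "rotate by `l`" permutation of `Fin (k+l)` flipping the two blocks. -/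
def flipPerm (k l : ℕ) : Perm (Fin (k + l)) :=
  (finAddFlip : Fin (k + l) ≃ Fin (l + k)).trans (finCongr (Nat.add_comm l k))

lemma flipPerm_val {k l : ℕ} (x : Fin (k + l)) :
    ((flipPerm k l) x : ℕ) = if (x : ℕ) < k then (x : ℕ) + l else (x : ℕ) - k := by
  rcases x with ⟨xv, hx⟩
  by_cases h : xv < k
  · rw [if_pos h]
    simp only [flipPerm, Equiv.trans_apply, finCongr_apply, Fin.coe_cast]
    rw [finAddFlip_apply_mk_left h]
    simp
    omega
  · rw [if_neg h]
    simp only [flipPerm, Equiv.trans_apply, finCongr_apply, Fin.coe_cast]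
    rw [finAddFlip_apply_mk_right (by omega) hx]

open Fin.NatCast in
lemma sign_flipPerm (k l : ℕ) : Perm.sign (flipPerm k l) = (-1) ^ (k * l) := by
  by_cases hkl : k + l = 0
  · have h1 : flipPerm k l = 1 := by
      ext x
      exact absurd x.isLt (by omega)
    have hk : k = 0 := by omega
    rw [h1, hk]
    simp
  · obtain ⟨N, hN⟩ : ∃ N, k + l = N + 1 := ⟨k + l - 1, by omega⟩
    have hsign := Equiv.Perm.sign_permCongr (finCongr hN) (flipPerm k l)
    have hconj : (finCongr hN).permCongr (flipPerm k l) = (finRotate (N + 1)) ^ l := by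
      ext x
      rw [finRotate_pow_apply]
      simp only [Equiv.permCongr_apply, finCongr_apply, finCongr_symm, Fin.coe_cast]
      have h1 := flipPerm_val (k := k) (l := l) (Fin.cast hN.symm x)
      have hc : ((Fin.cast hN.symm x : Fin (k + l)) : ℕ) = (x : ℕ) := rfl
      rw [hc] at h1
      have h2 : ((x + (l : Fin (N + 1)) : Fin (N + 1)) : ℕ) = ((x : ℕ) + (l % (N + 1))) % (N + 1) := by
        rw [Fin.add_def, Fin.val_natCast]
      rw [h1, h2]
      have hxlt := x.isLt
      by_cases hl : l < N + 1
      · rw [Nat.mod_eq_of_lt hl]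
        by_cases hxk : (x : ℕ) < k
        · rw [if_pos hxk, Nat.mod_eq_of_lt (by omega)]
        · rw [if_neg hxk]
          have : (x : ℕ) + l = ((x : ℕ) - k) + (N + 1) := by omega
          rw [this, Nat.add_mod_right, Nat.mod_eq_of_lt (by omega)]
      · have hk0 : k = 0 := by omega
        have hml : l % (N + 1) = 0 := by
          have hll : l = N + 1 := by omega
          rw [hll, Nat.mod_self]
        have hmod : ((x : ℕ) + 0) % (N + 1) = (x : ℕ) := by
          rw [Nat.add_zero]
          exact Nat.mod_eq_of_lt hxlt
        rw [hml]
        rw [hmod]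
        rw [if_neg (by omega)]
        omega
    rw [← hsign, hconj, map_pow, sign_finRotate, ← pow_mul]
    have hNl : N * l = k * l + l * (l - 1) := by
      rcases l with _ | s
      · simp
      · have hNs : N = k + s := by omega
        subst hNs
        simp only [Nat.succ_sub_one]
        ring
    have heven : Even (l * (l - 1)) := by
      rcases l with _ | s
      · simp
      · simpa [Nat.succ_sub_one, mul_comm] using Nat.even_mul_succ_self s
    rw [Nat.add_sub_cancel, hNl, pow_add, heven.neg_one_pow, mul_one]

end flip

section helpers

lemma cons_mk_succ {N : ℕ} {α : Sort*} (c : α) (w : Fin N → α) (sv : ℕ) (h : sv + 1 < N + 1) :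
    (Fin.cons c w : Fin (N + 1) → α) ⟨sv + 1, h⟩ = w ⟨sv, by omega⟩ := by
  have h2 : (⟨sv + 1, h⟩ : Fin (N + 1)) = (⟨sv, by omega⟩ : Fin N).succ := rfl
  rw [h2, Fin.cons_succ]

lemma cons_mk_zero {N : ℕ} {α : Sort*} (c : α) (w : Fin N → α) (h : 0 < N + 1) :
    (Fin.cons c w : Fin (N + 1) → α) ⟨0, h⟩ = c := rfl

lemma cycleRange_mk_lt {N : ℕ} {p : Fin (N + 1)} {sv : ℕ} (hs : sv < N + 1) (hlt : sv < (p : ℕ)) :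
    Fin.cycleRange p ⟨sv, hs⟩ = ⟨sv + 1, by omega⟩ := by
  apply Fin.ext
  rw [Fin.coe_cycleRange_of_lt (by rw [Fin.lt_def]; exact hlt)]

lemma cycleRange_mk_self {N : ℕ} {p : Fin (N + 1)} {sv : ℕ} (hs : sv < N + 1)
    (heq : sv = (p : ℕ)) : Fin.cycleRange p ⟨sv, hs⟩ = 0 := by
  have : (⟨sv, hs⟩ : Fin (N + 1)) = p := Fin.ext heq
  rw [this, Fin.cycleRange_self]

lemma cycleRange_mk_gt {N : ℕ} {p : Fin (N + 1)} {sv : ℕ} (hs : sv < N + 1)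
    (hgt : (p : ℕ) < sv) : Fin.cycleRange p ⟨sv, hs⟩ = ⟨sv, hs⟩ :=
  Fin.cycleRange_of_gt (by rw [Fin.lt_def]; exact hgt)

lemma units_neg_one_pow_smul {M : Type*} [AddCommGroup M] [Module ℝ M] (j : ℕ) (x : M) :
    ((-1 : ℤˣ) ^ j) • x = ((-1 : ℝ) ^ j) • x := by
  rw [Units.smul_def]
  have h1 : (((-1 : ℤˣ) ^ j : ℤˣ) : ℤ) = (-1 : ℤ) ^ j := by push_cast; ring
  rw [h1, ← Int.cast_smul_eq_zsmul ℝ]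
  norm_cast

lemma cons_smul_left {l : ℕ} (Q : V [⋀^Fin (l + 1)]→ₗ[ℝ] V) (c : ℝ) (x : V) (w : Fin l → V) :
    Q (Fin.cons (c • x) w) = c • Q (Fin.cons x w) := by
  have h := Q.toMultilinearMap.map_update_smul (Fin.cons x w) 0 c x
  rw [Fin.update_cons_zero, Fin.update_cons_zero] at h
  exact h

lemma cons_eq_cons_of_ne_zero {N : ℕ} {α : Sort*} (c c' : α) (w : Fin N → α)
    (t : Fin (N + 1)) (ht : t ≠ 0) :
    (Fin.cons c w : Fin (N + 1) → α) t = (Fin.cons c' w : Fin (N + 1) → α) t := by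
  rcases Fin.eq_zero_or_eq_succ t with h0 | ⟨r, rfl⟩
  · exact absurd h0 ht
  · rw [Fin.cons_succ, Fin.cons_succ]

end helpers

section hook
variable [FiniteDimensional ℝ V] {n : ℕ}

/-- The normalized summand appearing in the partial trace of `nrHook`. -/
noncomputable def Sval {k l : ℕ} (b : Module.Basis (Fin n) ℝ V) (P : V [⋀^Fin (k + 1)]→ₗ[ℝ] V)
    (Q : V [⋀^Fin (l + 1)]→ₗ[ℝ] V) (u : Fin (k + l) → V) (θ : Perm (Fin (k + l))) : ℝ :=
  ∑ i, b.coord i (Q (Fin.cons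
      (P (Fin.cons (b i) (fun a : Fin k => u (θ (Fin.castAdd l a)))))
      (fun j : Fin l => u (θ (Fin.natAdd k j)))))

lemma hook_split {k l : ℕ} (b : Module.Basis (Fin n) ℝ V)
    (P : V [⋀^Fin (k + 1)]→ₗ[ℝ] V) (Q : V [⋀^Fin (l + 1)]→ₗ[ℝ] V)
    (hQ : ∀ u : Fin l → V, ∑ i, b.coord i (Q (Fin.cons (b i) u)) = 0)
    (u : Fin (k + l) → V) (h : k + 1 + l = k + l + 1) :
    ∑ i, b.coord i (nrHook P Q
        (fun t => (Fin.cons (b i) u : Fin (k + l + 1) → V) (Fin.cast h t)))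
      = (k.factorial * l.factorial : ℝ)⁻¹ *
        ∑ θ : Perm (Fin (k + l)), ((Perm.sign θ : ℤ) : ℝ) * Sval b P Q u θ := by
  classical
  have step1 : ∀ i : Fin n,
      b.coord i (nrHook P Q
        (fun t => (Fin.cons (b i) u : Fin (k + l + 1) → V) (Fin.cast h t)))
      = (((k+1).factorial * l.factorial : ℝ))⁻¹ *
          ∑ σ : Perm (Fin (k + 1 + l)), ((Perm.sign σ : ℤ) : ℝ) *
            b.coord i (Q (Fin.cons
              (P fun a : Fin (k+1) =>
                (Fin.cons (b i) u : Fin (k+l+1) → V) (Fin.cast h (σ (Fin.castAdd l a))))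
              (fun j : Fin l =>
                (Fin.cons (b i) u : Fin (k+l+1) → V) (Fin.cast h (σ (Fin.natAdd (k+1) j)))))) := by
    intro i
    simp only [nrHook, map_smul, map_sum, map_zsmul, smul_eq_mul, zsmul_eq_mul]
  rw [Finset.sum_congr rfl (fun i _ => step1 i), ← Finset.mul_sum, Finset.sum_comm]
  let e : (Fin (k + l + 1) × Perm (Fin (k + l))) ≃ Perm (Fin (k + 1 + l)) :=
    (permSplit (k + l)).trans (Equiv.permCongr (finCongr h.symm))
  have key : ∀ p : Fin (k + l + 1), ∀ θ : Perm (Fin (k + l)),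
      (∑ i, ((Perm.sign (e (p, θ)) : ℤ) : ℝ) *
        b.coord i (Q (Fin.cons
          (P fun a : Fin (k+1) =>
            (Fin.cons (b i) u : Fin (k+l+1) → V) (Fin.cast h ((e (p, θ)) (Fin.castAdd l a))))
          (fun j : Fin l =>
            (Fin.cons (b i) u : Fin (k+l+1) → V) (Fin.cast h ((e (p, θ)) (Fin.natAdd (k+1) j)))))))
      = if ((p : ℕ) < k + 1) then ((Perm.sign θ : ℤ) : ℝ) * Sval b P Q u θ else 0 := by
    intro p θ
    have hsgn : Perm.sign (e (p, θ)) = (-1) ^ (p : ℕ) * Perm.sign θ := by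
      show Perm.sign (Equiv.permCongr (finCongr h.symm) (permSplit (k + l) (p, θ))) = _
      rw [Equiv.Perm.sign_permCongr, sign_permSplit]
    have harg : ∀ (i : Fin n) (t : Fin (k + 1 + l)),
        (Fin.cons (b i) u : Fin (k + l + 1) → V) (Fin.cast h ((e (p, θ)) t))
          = (Fin.cons (b i) (u ∘ θ) : Fin (k + l + 1) → V)
              (Fin.cycleRange p (Fin.cast h t)) := by
      intro i t
      have h1 : Fin.cast h ((e (p, θ)) t) = (permSplit (k + l) (p, θ)) (Fin.cast h t) := by
        apply Fin.ext
        simp [e, Equiv.permCongr_apply]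
      rw [h1, permSplit_apply, Perm.mul_apply, cons_comp_ext]
    by_cases hp : (p : ℕ) < k + 1
    · rw [if_pos hp]
      have hinner : ∀ i : Fin n,
          (fun a : Fin (k + 1) =>
            (Fin.cons (b i) (u ∘ θ) : Fin (k + l + 1) → V)
              (Fin.cycleRange p (Fin.cast h (Fin.castAdd l a))))
          = (Fin.cons (b i) (fun a : Fin k => u (θ (Fin.castAdd l a))) : Fin (k + 1) → V)
              ∘ (Fin.cycleRange (⟨(p : ℕ), hp⟩ : Fin (k + 1))) := by
        intro i
        funext a
        rcases a with ⟨av, ha⟩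
        have hc : Fin.cast h (Fin.castAdd l ⟨av, ha⟩) = (⟨av, by omega⟩ : Fin (k + l + 1)) := rfl
        simp only [Function.comp_apply]
        rw [hc]
        rcases lt_trichotomy av (p : ℕ) with hcc | hcc | hcc
        · rw [cycleRange_mk_lt (by omega) hcc, cycleRange_mk_lt ha hcc,
            cons_mk_succ, cons_mk_succ]
          rfl
        · rw [cycleRange_mk_self (by omega) hcc, cycleRange_mk_self ha hcc,
            Fin.cons_zero, Fin.cons_zero]
        · obtain ⟨aw, rfl⟩ : ∃ aw, av = aw + 1 := ⟨av - 1, by omega⟩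
          rw [cycleRange_mk_gt (by omega) hcc, cycleRange_mk_gt ha hcc,
            cons_mk_succ, cons_mk_succ]
          rfl
      have houter : ∀ i : Fin n,
          (fun j : Fin l =>
            (Fin.cons (b i) (u ∘ θ) : Fin (k + l + 1) → V)
              (Fin.cycleRange p (Fin.cast h (Fin.natAdd (k + 1) j))))
          = fun j : Fin l => u (θ (Fin.natAdd k j)) := by
        intro i
        funext j
        rcases j with ⟨jv, hj⟩
        have hc : Fin.cast h (Fin.natAdd (k + 1) ⟨jv, hj⟩)
            = (⟨k + 1 + jv, by omega⟩ : Fin (k + l + 1)) := rfl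
        rw [hc, cycleRange_mk_gt (by omega) (by omega)]
        have hmk : (⟨k + 1 + jv, by omega⟩ : Fin (k + l + 1))
            = (⟨(k + jv) + 1, by omega⟩ : Fin (k + l + 1)) :=
          Fin.ext (by omega : k + 1 + jv = (k + jv) + 1)
        rw [hmk, cons_mk_succ]
        rfl
      have hQi : ∀ i : Fin n,
          (Q (Fin.cons
            (P fun a : Fin (k+1) =>
              (Fin.cons (b i) u : Fin (k+l+1) → V) (Fin.cast h ((e (p, θ)) (Fin.castAdd l a))))
            (fun j : Fin l =>
              (Fin.cons (b i) u : Fin (k+l+1) → V) (Fin.cast h ((e (p, θ)) (Fin.natAdd (k+1) j))))))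
          = ((-1 : ℝ) ^ (p : ℕ)) •
              Q (Fin.cons (P (Fin.cons (b i) (fun a : Fin k => u (θ (Fin.castAdd l a)))))
                (fun j : Fin l => u (θ (Fin.natAdd k j)))) := by
        intro i
        simp only [harg]
        rw [hinner i, houter i, AlternatingMap.map_perm, Fin.sign_cycleRange,
          units_neg_one_pow_smul, cons_smul_left]
      simp only [hQi, map_smul, smul_eq_mul, hsgn, Sval]
      rw [Finset.mul_sum]
      refine Finset.sum_congr rfl fun i _ => ?_
      push_cast [Units.val_mul, Units.val_pow_eq_pow_val]
      rcases Nat.even_or_odd (p : ℕ) with hpar | hpar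
      · rw [hpar.neg_one_pow]; ring
      · rw [hpar.neg_one_pow]; ring
    · rw [if_neg hp]
      have hl1 : k + 1 ≤ k + l := by
        have := p.isLt; omega
      set s : Fin l := ⟨(p : ℕ) - (k + 1), by have := p.isLt; omega⟩ with hs
      have hinner : ∀ i : Fin n,
          (fun a : Fin (k + 1) =>
            (Fin.cons (b i) (u ∘ θ) : Fin (k + l + 1) → V)
              (Fin.cycleRange p (Fin.cast h (Fin.castAdd l a))))
          = fun a : Fin (k + 1) => u (θ (Fin.castLE hl1 a)) := by
        intro i
        funext a
        rcases a with ⟨av, ha⟩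
        have hc : Fin.cast h (Fin.castAdd l ⟨av, ha⟩) = (⟨av, by omega⟩ : Fin (k + l + 1)) := rfl
        rw [hc, cycleRange_mk_lt (by omega) (by omega), cons_mk_succ]
        rfl
      have houter : ∀ i : Fin n,
          (fun j : Fin l =>
            (Fin.cons (b i) (u ∘ θ) : Fin (k + l + 1) → V)
              (Fin.cycleRange p (Fin.cast h (Fin.natAdd (k + 1) j))))
          = Function.update (fun j : Fin l =>
              (Fin.cons (0 : V) (u ∘ θ) : Fin (k + l + 1) → V)
                (Fin.cycleRange p (Fin.cast h (Fin.natAdd (k + 1) j)))) s (b i) := by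
        intro i
        funext j
        rcases j with ⟨jv, hj⟩
        have hc : Fin.cast h (Fin.natAdd (k + 1) ⟨jv, hj⟩)
            = (⟨k + 1 + jv, by omega⟩ : Fin (k + l + 1)) := rfl
        by_cases hje : jv = (p : ℕ) - (k + 1)
        · have hjs : (⟨jv, hj⟩ : Fin l) = s := Fin.ext (by simp [hs, hje])
          rw [hc, hjs, Function.update_self]
          rw [cycleRange_mk_self (by omega) (by omega), Fin.cons_zero]
        · have hne : (⟨jv, hj⟩ : Fin l) ≠ s := fun hcon =>
            hje (congrArg Fin.val hcon)
          rw [Function.update_of_ne hne]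
          have hXp : Fin.cast h (Fin.natAdd (k + 1) ⟨jv, hj⟩) ≠ p := by
            intro hcon
            have hv : k + 1 + jv = (p : ℕ) := congrArg Fin.val hcon
            exact hje (by omega)
          have ht : Fin.cycleRange p (Fin.cast h (Fin.natAdd (k + 1) ⟨jv, hj⟩)) ≠ 0 := by
            intro hcon
            exact hXp ((Fin.cycleRange p).injective
              (hcon.trans (Fin.cycleRange_self p).symm))
          exact cons_eq_cons_of_ne_zero _ _ _ _ ht
      have hQi : ∀ i : Fin n,
          (Q (Fin.cons
            (P fun a : Fin (k+1) =>
              (Fin.cons (b i) u : Fin (k+l+1) → V) (Fin.cast h ((e (p, θ)) (Fin.castAdd l a))))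
            (fun j : Fin l =>
              (Fin.cons (b i) u : Fin (k+l+1) → V) (Fin.cast h ((e (p, θ)) (Fin.natAdd (k+1) j))))))
          = Q (Function.update (Fin.cons
              (P fun a : Fin (k+1) => u (θ (Fin.castLE hl1 a)))
              (fun j : Fin l => (Fin.cons (0 : V) (u ∘ θ) : Fin (k+l+1) → V)
                (Fin.cycleRange p (Fin.cast h (Fin.natAdd (k+1) j))))) s.succ (b i)) := by
        intro i
        simp only [harg]
        rw [hinner i, houter i, Fin.cons_update]
      simp only [hQi]
      rw [← Finset.mul_sum,
        sum_coord_update_eq_zero b Q hQ _ s.succ (Fin.succ_ne_zero s), mul_zero]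
  rw [← Equiv.sum_comp e, Fintype.sum_prod_type]
  rw [Finset.sum_congr rfl fun p (_ : p ∈ Finset.univ) =>
    Finset.sum_congr rfl fun θ (_ : θ ∈ Finset.univ) => key p θ]
  have hsplit : ∀ p : Fin (k + l + 1),
      (∑ θ : Perm (Fin (k + l)),
        if ((p : ℕ) < k + 1) then ((Perm.sign θ : ℤ) : ℝ) * Sval b P Q u θ else 0)
      = if ((p : ℕ) < k + 1) then
          (∑ θ : Perm (Fin (k + l)), ((Perm.sign θ : ℤ) : ℝ) * Sval b P Q u θ) else 0 := by
    intro p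
    split_ifs <;> simp
  rw [Finset.sum_congr rfl fun p (_ : p ∈ Finset.univ) => hsplit p]
  rw [Finset.sum_ite, Finset.sum_const, Finset.sum_const_zero, add_zero]
  have hcard : (Finset.univ.filter fun p : Fin (k + l + 1) => (p : ℕ) < k + 1).card
      = k + 1 := by
    have himg : (Finset.univ.filter fun p : Fin (k + l + 1) => (p : ℕ) < k + 1)
        = Finset.univ.map ⟨Fin.castLE (by omega : k + 1 ≤ k + l + 1), Fin.castLE_injective _⟩ := by
      ext x
      simp only [Finset.mem_filter, Finset.mem_univ, true_and, Finset.mem_map,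
        Function.Embedding.coeFn_mk]
      constructor
      · intro hx
        exact ⟨⟨(x : ℕ), hx⟩, Fin.ext rfl⟩
      · rintro ⟨a, rfl⟩
        exact a.isLt
    rw [himg, Finset.card_map, Finset.card_univ, Fintype.card_fin]
  rw [hcard, nsmul_eq_mul]
  have hfk : (k.factorial : ℝ) ≠ 0 := Nat.cast_ne_zero.mpr k.factorial_ne_zero
  have hfl : (l.factorial : ℝ) ≠ 0 := Nat.cast_ne_zero.mpr l.factorial_ne_zero
  rw [Nat.factorial_succ]
  push_cast
  rw [← mul_assoc]
  congr 1
  field_simp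

lemma S_comm {k l : ℕ} (b : Module.Basis (Fin n) ℝ V) (P : V [⋀^Fin (k + 1)]→ₗ[ℝ] V)
    (Q : V [⋀^Fin (l + 1)]→ₗ[ℝ] V) (x : Fin k → V) (w : Fin l → V) :
    ∑ i, b.coord i (Q (Fin.cons (P (Fin.cons (b i) x)) w))
      = ∑ i, b.coord i (P (Fin.cons (Q (Fin.cons (b i) w)) x)) := by
  have h := coord_comm b (consMap P x) (consMap Q w)
  simpa [consMap_apply] using h

theorem trace_kernel_sl_and_nrBracket_ker'
    (b : Module.Basis (Fin n) ℝ V) :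
    (∀ (k l : ℕ) (P : V [⋀^Fin (k + 1)]→ₗ[ℝ] V) (Q : V [⋀^Fin (l + 1)]→ₗ[ℝ] V),
      (∀ u : Fin k → V, ∑ i, b.coord i (P (Fin.cons (b i) u)) = 0) →
      (∀ u : Fin l → V, ∑ i, b.coord i (Q (Fin.cons (b i) u)) = 0) →
      ∀ u : Fin (k + l) → V,
        ∑ i, b.coord i
          (nrBracket P Q (fun t => (Fin.cons (b i) u : Fin (k + l + 1) → V) (Fin.cast (Nat.add_right_comm k 1 l) t))) = 0) := by
  intro k l P Q hP hQ u
  have hlk : l + k = k + l := by omega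
  have h1 : (k + 1 + l) = (k + l + 1) := by omega
  have h2 : (l + 1 + k) = (l + k + 1) := by omega
  have hcast : ∀ (i : Fin n) (t : Fin (l + 1 + k)),
      (Fin.cons (b i) u : Fin (k + l + 1) → V)
          (Fin.cast (show k + 1 + l = k + l + 1 by omega)
            (Fin.cast (show l + 1 + k = k + 1 + l by omega) t))
        = (Fin.cons (b i) (fun m : Fin (l + k) => u (Fin.cast hlk m)) : Fin (l + k + 1) → V)
            (Fin.cast h2 t) := by
    intro i t
    rcases Fin.eq_zero_or_eq_succ (Fin.cast h2 t) with h0 | ⟨r, hr⟩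
    · have h0' : Fin.cast (show k + 1 + l = k + l + 1 by omega)
          (Fin.cast (show l + 1 + k = k + 1 + l by omega) t) = (0 : Fin (k + l + 1)) := by
        apply Fin.ext
        have := congrArg Fin.val h0
        simpa using this
      rw [h0', h0, Fin.cons_zero, Fin.cons_zero]
    · have hsucc : Fin.cast (show k + 1 + l = k + l + 1 by omega)
          (Fin.cast (show l + 1 + k = k + 1 + l by omega) t)
            = (Fin.cast hlk r).succ := by
        apply Fin.ext
        have := congrArg Fin.val hr
        simpa using this
      rw [hsucc, hr, Fin.cons_succ, Fin.cons_succ]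
  have hstep : (∑ i, b.coord i
          (nrBracket P Q (fun t => (Fin.cons (b i) u : Fin (k + l + 1) → V)
            (Fin.cast (show k + 1 + l = k + l + 1 by omega) t))))
      = (∑ i, b.coord i (nrHook P Q
            (fun t => (Fin.cons (b i) u : Fin (k + l + 1) → V)
              (Fin.cast (show k + 1 + l = k + l + 1 by omega) t))))
        - (((-1 : ℤ) ^ (k * l) : ℤ) : ℝ) * ∑ i, b.coord i (nrHook Q P
            (fun t => (Fin.cons (b i) (fun m : Fin (l + k) => u (Fin.cast hlk m)) :
                Fin (l + k + 1) → V) (Fin.cast h2 t))) := by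
        rw [Finset.mul_sum, ← Finset.sum_sub_distrib]
        refine Finset.sum_congr rfl fun i _ => ?_
        simp only [nrBracket, map_sub, map_zsmul, zsmul_eq_mul]
        congr 3
        congr 1
        funext t
        exact hcast i t
  rw [hstep]
  rw [hook_split b P Q hQ u (show k + 1 + l = k + l + 1 by omega),
      hook_split b Q P hP (fun m : Fin (l + k) => u (Fin.cast hlk m)) h2]
  let B : Perm (Fin (l + k)) ≃ Perm (Fin (k + l)) :=
    { toFun := fun θ' => ((finAddFlip : Fin (k + l) ≃ Fin (l + k)).trans θ').trans (finCongr hlk)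
      invFun := fun θ => (((finAddFlip : Fin (k + l) ≃ Fin (l + k)).symm).trans θ).trans
          (finCongr hlk.symm)
      left_inv := fun θ' => by ext x; simp
      right_inv := fun θ => by ext x; simp }
  have hBeq : ∀ θ' : Perm (Fin (l + k)),
      B θ' = (Equiv.permCongr (finCongr hlk) θ') * flipPerm k l := by
    intro θ'
    ext x
    simp [B, flipPerm, Equiv.permCongr_apply]
  have hsgnB : ∀ θ' : Perm (Fin (l + k)),
      Perm.sign (B θ') = (-1) ^ (k * l) * Perm.sign θ' := by
    intro θ'
    rw [hBeq θ', Equiv.Perm.sign_mul, Equiv.Perm.sign_permCongr, sign_flipPerm, mul_comm]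
  have hSB : ∀ θ' : Perm (Fin (l + k)),
      Sval b P Q u (B θ') = Sval b Q P (fun m : Fin (l + k) => u (Fin.cast hlk m)) θ' := by
    intro θ'
    have hx : (fun a : Fin k => u ((B θ') (Fin.castAdd l a)))
        = fun a : Fin k => u (Fin.cast hlk (θ' (Fin.natAdd l a))) := by
      funext a
      exact congrArg u (by simp [B, finAddFlip_apply_castAdd])
    have hw : (fun j : Fin l => u ((B θ') (Fin.natAdd k j)))
        = fun j : Fin l => u (Fin.cast hlk (θ' (Fin.castAdd k j))) := by
      funext j
      exact congrArg u (by simp [B, finAddFlip_apply_natAdd])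
    simp only [Sval]
    rw [hx, hw]
    exact S_comm b P Q _ _
  rw [← Equiv.sum_comp B (fun θ => ((Perm.sign θ : ℤ) : ℝ) * Sval b P Q u θ)]
  have hterm : ∀ θ' : Perm (Fin (l + k)),
      ((Perm.sign (B θ') : ℤ) : ℝ) * Sval b P Q u (B θ')
        = ((-1 : ℝ) ^ (k * l)) * (((Perm.sign θ' : ℤ) : ℝ)
            * Sval b Q P (fun m : Fin (l + k) => u (Fin.cast hlk m)) θ') := by
    intro θ'
    rw [hSB θ', hsgnB θ']
    push_cast [Units.val_mul, Units.val_pow_eq_pow_val]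
    ring
  rw [Finset.sum_congr rfl fun θ' (_ : θ' ∈ Finset.univ) => hterm θ', ← Finset.mul_sum]
  have hc : ((l.factorial * k.factorial : ℝ)) = ((k.factorial * l.factorial : ℝ)) := by ring
  push_cast
  rw [hc]
  ring

end hook

/-- the kernel of `φ₁ = tr : End(V) → ℝ` is `sl(V)`; traceless endomorphisms
are closed under the commutator; and, more generally, the Nijenhuis–Richardson bracket of
elements of `ker φ_{k₁}` and `ker φ_{k₂}` lies in `ker φ_{k₁+k₂−1}` (the kernel condition
for `ψ` of degree `k` being that all partial traces `Σᵢ eⁱ(ψ(eᵢ, u₁, …, u_{k−1}))`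
vanish). -/
theorem trace_kernel_sl_and_nrBracket_ker
    [FiniteDimensional ℝ V] {n : ℕ} (b : Module.Basis (Fin n) ℝ V) :
    (∀ A : Module.End ℝ V,
      LinearMap.trace ℝ V A = 0 ↔
        LinearMap.toMatrix b b A ∈ LieAlgebra.SpecialLinear.sl (Fin n) ℝ) ∧
    (∀ A B : Module.End ℝ V,
      LinearMap.trace ℝ V A = 0 → LinearMap.trace ℝ V B = 0 →
        LinearMap.trace ℝ V ⁅A, B⁆ = 0) ∧
    (∀ (k l : ℕ) (P : V [⋀^Fin (k + 1)]→ₗ[ℝ] V) (Q : V [⋀^Fin (l + 1)]→ₗ[ℝ] V),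
      (∀ u : Fin k → V, ∑ i, b.coord i (P (Fin.cons (b i) u)) = 0) →
      (∀ u : Fin l → V, ∑ i, b.coord i (Q (Fin.cons (b i) u)) = 0) →
      ∀ u : Fin (k + l) → V,
        ∑ i, b.coord i
          (nrBracket P Q (fun t => (Fin.cons (b i) u : Fin (k + l + 1) → V) (Fin.cast (show k + 1 + l = k + l + 1 by omega) t))) = 0) := by
  refine ⟨?_, ?_, trace_kernel_sl_and_nrBracket_ker' b⟩
  · intro A
    rw [LinearMap.trace_eq_matrix_trace ℝ b]
    constructor
    · intro hA
      simpa [LieAlgebra.SpecialLinear.sl, LinearMap.mem_ker] using hA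
    · intro hA
      simpa [LieAlgebra.SpecialLinear.sl, LinearMap.mem_ker] using hA
  · intro A B hA hB
    rw [Ring.lie_def, map_sub, LinearMap.trace_mul_comm, sub_self]
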